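/- Let R₂ ≥ 1 be an integer and let c, d be integers with 0 ≤ c, d ≤ R₂. Then [(1/2)C(R₂−1+c, 2c) + C(R₂−1+c, 2c+1)]·[(1/2)C(R₂−1+d, 2d−1) + C(R₂−1+d, 2d)] − [(1/2)C(R₂−1+d, 2d) + C(R₂−1+d, 2d+1)]·[(1/2)C(R₂−1+c, 2c−1) + C(R₂−1+c, 2c)] = 2R₂(R₂−1/2)(R₂+1/2) · (d−c) · (R₂+c−1)!(R₂+d−1)!/((2c+1)!(R₂−c)!(2d+1)!(R₂−d)!). -/

import Mathlib

noncomputable def Cb (m : ℕ) (j : ℤ) : ℝ := if 0 ≤ j then (m.choose j.toNat : ℝ) else 0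

lemma Cb_nat (m k : ℕ) : Cb m (k : ℤ) = m.choose k := by simp [Cb]

lemma Cb_neg_one (m : ℕ) : Cb m (-1) = 0 := by simp [Cb]

lemma cast_choose' (a b : ℕ) :
    ((a + b).choose a : ℝ) = (a+b).factorial / (a.factorial * b.factorial) := by
  rw [Nat.cast_choose ℝ (Nat.le_add_right a b), show a + b - a = b by omega]

lemma lemA (n c : ℕ) (h1 : 1 ≤ n) (hc : c ≤ n) :
    (1/2) * Cb (n-1+c) (2*(c:ℤ)) + Cb (n-1+c) (2*(c:ℤ)+1)
    = ((n:ℝ) - c) * ((n:ℝ) - 1/2) * ((n+c-1).factorial : ℝ) /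
        (((2*c+1).factorial : ℝ) * ((n-c).factorial : ℝ)) := by
  have e1 : (2*(c:ℤ)) = ((2*c : ℕ) : ℤ) := by push_cast; ring
  have e2 : (2*(c:ℤ)+1) = ((2*c+1 : ℕ) : ℤ) := by push_cast; ring
  rw [e2, e1, Cb_nat, Cb_nat]
  rcases Nat.lt_or_ge c n with h | h
  · rcases Nat.lt_or_ge (c+1) n with h2 | h2
    · -- c + 2 ≤ n
      obtain ⟨k, rfl⟩ : ∃ k, n = c + k + 2 := ⟨n - c - 2, by omega⟩
      have e3 : c + k + 2 - 1 + c = 2*c + (k+1) := by omega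
      have e4 : c + k + 2 + c - 1 = 2*c + (k+1) := by omega
      have e5 : c + k + 2 - c = k + 2 := by omega
      rw [e3, e4, e5]
      have h6 : (2*c + (k+1)).choose (2*c) = (2*c + (k+1)).choose (2*c) := rfl
      rw [show (2*c + (k+1) : ℕ) = 2*c + (k+1) from rfl]
      rw [cast_choose' (2*c) (k+1)]
      have e7 : (2*c + (k+1) : ℕ) = (2*c+1) + k := by omega
      rw [show ((2*c+(k+1)).choose (2*c+1) : ℝ) = ((2*c+1)+k).choose (2*c+1) by rw [e7],
        cast_choose' (2*c+1) k]
      rw [show ((2*c+1)+k : ℕ) = 2*c+(k+1) from by omega]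
      rw [Nat.factorial_succ (2*c), Nat.factorial_succ (k+1), Nat.factorial_succ k]
      have p1 : ((2*c).factorial : ℝ) ≠ 0 := Nat.cast_ne_zero.2 (Nat.factorial_ne_zero _)
      have p2 : (k.factorial : ℝ) ≠ 0 := Nat.cast_ne_zero.2 (Nat.factorial_ne_zero _)
      push_cast
      field_simp
      ring
    · -- c + 1 = n
      have : n = c + 1 := by omega
      subst this
      have e3 : c + 1 - 1 + c = 2*c := by omega
      have e4 : c + 1 + c - 1 = 2*c := by omega
      have e5 : c + 1 - c = 1 := by omega
      rw [e3, e4, e5, Nat.choose_self, Nat.choose_eq_zero_of_lt (by omega),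
        Nat.factorial_succ (2*c), Nat.factorial_one]
      have p1 : (((2*c+1)*(2*c).factorial : ℕ) : ℝ) ≠ 0 :=
        Nat.cast_ne_zero.2 (Nat.mul_ne_zero (by omega) (Nat.factorial_ne_zero _))
      rw [eq_div_iff (by simpa using p1)]
      push_cast
      ring
  · -- c = n
    have : c = n := by omega
    subst this
    rw [Nat.choose_eq_zero_of_lt (by omega), Nat.choose_eq_zero_of_lt (by omega)]
    simp

lemma lemB (n c : ℕ) (h1 : 1 ≤ n) (hc : c ≤ n) :
    (1/2) * Cb (n-1+c) (2*(c:ℤ)-1) + Cb (n-1+c) (2*(c:ℤ))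
    = (2*(c:ℝ)+1) * (n:ℝ) * ((n+c-1).factorial : ℝ) /
        (((2*c+1).factorial : ℝ) * ((n-c).factorial : ℝ)) := by
  rcases Nat.eq_zero_or_pos c with rfl | hcpos
  · obtain ⟨m, rfl⟩ : ∃ m, n = m + 1 := ⟨n-1, by omega⟩
    rw [show (2*((0:ℕ):ℤ)-1) = -1 by norm_num, Cb_neg_one,
      show (2*((0:ℕ):ℤ)) = ((0:ℕ):ℤ) by norm_num, Cb_nat, Nat.choose_zero_right,
      show m + 1 + 0 - 1 = m by omega, show m + 1 - 0 = m + 1 by omega,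
      show 2*0+1 = 1 by rfl, Nat.factorial_one, Nat.factorial_succ m]
    have p1 : (m.factorial : ℝ) ≠ 0 := Nat.cast_ne_zero.2 (Nat.factorial_ne_zero _)
    push_cast
    field_simp
    norm_num
  · have e1 : (2*(c:ℤ)) = ((2*c : ℕ) : ℤ) := by push_cast; ring
    have e2 : (2*(c:ℤ)-1) = ((2*c-1 : ℕ) : ℤ) := by omega
    rw [e2, e1, Cb_nat, Cb_nat]
    rcases Nat.lt_or_ge c n with h | h
    · -- 1 ≤ c ≤ n-1; write c = c'+1, n = c'+k+2
      obtain ⟨c', rfl⟩ : ∃ c', c = c' + 1 := ⟨c-1, by omega⟩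
      obtain ⟨k, rfl⟩ : ∃ k, n = c' + k + 2 := ⟨n - c' - 2, by omega⟩
      have e3 : c' + k + 2 - 1 + (c'+1) = (2*c'+1) + (k+1) := by omega
      have e4 : 2*(c'+1) - 1 = 2*c'+1 := by omega
      have e5 : 2*(c'+1) = (2*c'+2) := by omega
      have e6 : c' + k + 2 + (c'+1) - 1 = 2*c'+k+2 := by omega
      have e7 : c' + k + 2 - (c'+1) = k + 1 := by omega
      rw [e3, e4, e5, e6, e7]
      rw [show ((2*c'+1)+(k+1)).choose (2*c'+1) = ((2*c'+1)+(k+1)).choose (2*c'+1) from rfl,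
        cast_choose' (2*c'+1) (k+1)]
      rw [show ((2*c'+1)+(k+1) : ℕ) = (2*c'+2) + k by omega, cast_choose' (2*c'+2) k]
      rw [show ((2*c'+2)+k : ℕ) = 2*c'+k+2 by omega]
      rw [Nat.factorial_succ (2*c'+2),
        show (2*c'+2) = (2*c'+1)+1 from rfl, Nat.factorial_succ (2*c'+1),
        Nat.factorial_succ k]
      have p1 : ((2*c'+1).factorial : ℝ) ≠ 0 := Nat.cast_ne_zero.2 (Nat.factorial_ne_zero _)
      have p2 : (k.factorial : ℝ) ≠ 0 := Nat.cast_ne_zero.2 (Nat.factorial_ne_zero _)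
      push_cast
      field_simp
      ring
    · -- c = n
      have : c = n := by omega
      subst this
      rw [show c - 1 + c = 2*c - 1 by omega, show 2*c - 1 = 2*c-1 from rfl,
        Nat.choose_self, Nat.choose_eq_zero_of_lt (by omega),
        show c + c - 1 = 2*c-1 by omega, show c - c = 0 by omega]
      obtain ⟨m, rfl⟩ : ∃ m, c = m + 1 := ⟨c-1, by omega⟩
      rw [show 2*(m+1)-1 = 2*m+1 by omega, show 2*(m+1)+1 = (2*m+1)+1+1 by omega]
      rw [Nat.factorial_succ ((2*m+1)+1), Nat.factorial_succ (2*m+1), Nat.factorial_zero]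
      have p1 : ((2*m+1).factorial : ℝ) ≠ 0 := Nat.cast_ne_zero.2 (Nat.factorial_ne_zero _)
      push_cast
      field_simp
      ring

theorem binomial_determinant_two (R2 : ℕ) (hR2 : 1 ≤ R2) (c d : ℕ)
    (hc : c ≤ R2) (hd : d ≤ R2) :
    ((1/2) * Cb (R2-1+c) (2*(c:ℤ)) + Cb (R2-1+c) (2*(c:ℤ)+1)) *
        ((1/2) * Cb (R2-1+d) (2*(d:ℤ)-1) + Cb (R2-1+d) (2*(d:ℤ))) -
      ((1/2) * Cb (R2-1+d) (2*(d:ℤ)) + Cb (R2-1+d) (2*(d:ℤ)+1)) *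
        ((1/2) * Cb (R2-1+c) (2*(c:ℤ)-1) + Cb (R2-1+c) (2*(c:ℤ)))
    = 2 * R2 * ((R2:ℝ) - 1/2) * ((R2:ℝ) + 1/2) * ((d:ℝ) - (c:ℝ)) *
        ((R2+c-1).factorial * (R2+d-1).factorial : ℝ) /
        ((2*c+1).factorial * (R2-c).factorial * (2*d+1).factorial * (R2-d).factorial : ℝ) := by
  rw [lemA R2 c hR2 hc, lemA R2 d hR2 hd, lemB R2 c hR2 hc, lemB R2 d hR2 hd]
  have p1 : ((2*c+1).factorial : ℝ) ≠ 0 := Nat.cast_ne_zero.2 (Nat.factorial_ne_zero _)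
  have p2 : ((R2-c).factorial : ℝ) ≠ 0 := Nat.cast_ne_zero.2 (Nat.factorial_ne_zero _)
  have p3 : ((2*d+1).factorial : ℝ) ≠ 0 := Nat.cast_ne_zero.2 (Nat.factorial_ne_zero _)
  have p4 : ((R2-d).factorial : ℝ) ≠ 0 := Nat.cast_ne_zero.2 (Nat.factorial_ne_zero _)
  field_simp
  ring
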